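/- arXiv:2003.05053 — 5 statements merged into one kernel-verified Lean document; each statement's English description precedes it below -/
import Mathlib

section
/- Let M_h, M_v ≥ 1 be natural numbers, M = 2 M_h M_v, let ρ_vv, ρ_vh ∈ ℂ with (ρ_vv, ρ_vh) ≠ (0,0), b = (|ρ_vv|² + |ρ_vh|²)^{−1/2}, and let R ∈ ℂ^{M×M} be unitary. For every unit-norm vector c ∈ ℂ^M, the integral over (ψ_az, ψ_el) ∈ [−π,π] × [−π,π] of the reference gain g(ψ_az, ψ_el, c) = | b ([ρ_vv, ρ_vh] ⊗ (d_{M_h}(ψ_az) ⊗ d_{M_v}(ψ_el))^H) R c |² satisfies ∫∫ g dψ_az dψ_el ≤ (2π)²/(M_h M_v), and equality holds exactly when R c is a linear combination of the vectors [ρ_vv* e_ℓᵀ, ρ_vh* e_ℓᵀ]ᵀ ∈ ℂ^M, ℓ = 1, …, M/2, where e_ℓ is the ℓ-th standard basis vector of ℂ^{M/2}. -/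
open Complex Matrix MeasureTheory

noncomputable def arv (M : ℕ) (ψ : ℝ) : Fin M → ℂ :=
  fun i => ((1 / Real.sqrt M : ℝ) : ℂ) * Complex.exp (Complex.I * (ψ : ℂ) * ((i : ℕ) : ℂ))

lemma lagrange (x y a b : ℂ) :
    Complex.normSq (x*a + y*b) + Complex.normSq ((starRingEnd ℂ) y * a - (starRingEnd ℂ) x * b)
      = (Complex.normSq x + Complex.normSq y) * (Complex.normSq a + Complex.normSq b) := by
  simp [Complex.normSq_apply, Complex.mul_re, Complex.mul_im, Complex.add_re, Complex.add_im,
    Complex.sub_re, Complex.sub_im]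
  ring

lemma int_exp (t : ℤ) :
    (∫ ψ : ℝ in (-Real.pi)..Real.pi, Complex.exp (Complex.I * (t:ℂ) * (ψ:ℂ)))
      = if t = 0 then (2*Real.pi : ℂ) else 0 := by
  by_cases ht : t = 0
  · simp [ht, intervalIntegral.integral_const]; ring
  · rw [if_neg ht]
    have hc : (Complex.I * (t:ℂ)) ≠ 0 := by
      simp [Complex.I_ne_zero, Complex.ext_iff]; exact_mod_cast ht
    rw [integral_exp_mul_complex hc]
    have h1 : Complex.exp (Complex.I * (t:ℂ) * (Real.pi:ℂ)) = (-1 : ℂ) ^ t := by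
      rw [show Complex.I * (t:ℂ) * (Real.pi:ℂ) = (t:ℂ) * (Real.pi * Complex.I) by ring,
        Complex.exp_int_mul, Complex.exp_pi_mul_I]
    have h2 : Complex.exp (Complex.I * (t:ℂ) * ((-Real.pi : ℝ):ℂ)) = (-1 : ℂ) ^ t := by
      push_cast
      rw [show Complex.I * (t:ℂ) * (-(Real.pi:ℂ)) = ((-t : ℤ):ℂ) * (Real.pi * Complex.I) by
        push_cast; ring, Complex.exp_int_mul, Complex.exp_pi_mul_I, _root_.zpow_neg,
        ← _root_.inv_zpow, inv_neg, inv_one]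
    rw [h1, h2, sub_self, zero_div]

lemma orth (a b : ℕ) :
    (∫ ψ : ℝ in (-Real.pi)..Real.pi,
        Complex.exp (-(Complex.I * (ψ:ℂ) * (a:ℂ))) * Complex.exp (Complex.I * (ψ:ℂ) * (b:ℂ)))
      = if a = b then (2*Real.pi : ℂ) else 0 := by
  have h : ∀ ψ : ℝ, Complex.exp (-(Complex.I * (ψ:ℂ) * (a:ℂ))) * Complex.exp (Complex.I * (ψ:ℂ) * (b:ℂ))
      = Complex.exp (Complex.I * (((b:ℤ) - (a:ℤ) : ℤ):ℂ) * (ψ:ℂ)) := by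
    intro ψ; rw [← Complex.exp_add]; congr 1; push_cast; ring
  rw [intervalIntegral.integral_congr (fun ψ _ => h ψ), int_exp]
  congr 1
  simp [sub_eq_zero, eq_comm]

theorem stmt_0 (Mh Mv : ℕ) (hMh : 1 ≤ Mh) (hMv : 1 ≤ Mv)
    (ρvv ρvh : ℂ) (hρ : (ρvv, ρvh) ≠ (0, 0))
    (R : Matrix (Fin 2 × (Fin Mh × Fin Mv)) (Fin 2 × (Fin Mh × Fin Mv)) ℂ)
    (hR : R ∈ Matrix.unitaryGroup (Fin 2 × (Fin Mh × Fin Mv)) ℂ)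
    (c : Fin 2 × (Fin Mh × Fin Mv) → ℂ)
    (hc : ∑ j : Fin 2 × (Fin Mh × Fin Mv), ‖c j‖ ^ 2 = 1) :
    let b : ℝ := (Real.sqrt (‖ρvv‖ ^ 2 + ‖ρvh‖ ^ 2))⁻¹
    let g : ℝ → ℝ → ℝ := fun ψaz ψel =>
      ‖(b : ℂ) * ∑ pk : Fin 2 × (Fin Mh × Fin Mv),
        (if pk.1 = 0 then ρvv else ρvh) *
          (starRingEnd ℂ) (arv Mh ψaz pk.2.1 * arv Mv ψel pk.2.2) * R.mulVec c pk‖ ^ 2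
    (∫ ψaz in (-Real.pi)..Real.pi, ∫ ψel in (-Real.pi)..Real.pi, g ψaz ψel)
        ≤ (2 * Real.pi) ^ 2 / ((Mh : ℝ) * (Mv : ℝ)) ∧
    ((∫ ψaz in (-Real.pi)..Real.pi, ∫ ψel in (-Real.pi)..Real.pi, g ψaz ψel)
          = (2 * Real.pi) ^ 2 / ((Mh : ℝ) * (Mv : ℝ)) ↔
      R.mulVec c ∈ Submodule.span ℂ (Set.range fun ℓ : Fin Mh × Fin Mv =>
        fun pk : Fin 2 × (Fin Mh × Fin Mv) =>
          (if pk.1 = 0 then (starRingEnd ℂ) ρvv else (starRingEnd ℂ) ρvh) *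
            (if pk.2 = ℓ then (1 : ℂ) else 0))) := by
  intro b g
  have hπ := Real.pi_pos
  set v : Fin 2 × (Fin Mh × Fin Mv) → ℂ := R.mulVec c with hv_def
  set s : ℝ := ‖ρvv‖ ^ 2 + ‖ρvh‖ ^ 2 with hs_def
  -- s > 0
  have hρ' : ρvv ≠ 0 ∨ ρvh ≠ 0 := by
    by_contra h; push_neg at h; exact hρ (by simp [h.1, h.2])
  have hs0 : 0 < s := by
    rcases hρ' with h | h
    · have := pow_pos (norm_pos_iff.mpr h) 2
      have h2 := sq_nonneg (‖ρvh‖); rw [hs_def]; nlinarith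
    · have := pow_pos (norm_pos_iff.mpr h) 2
      have h2 := sq_nonneg (‖ρvv‖); rw [hs_def]; nlinarith
  have hb2 : b ^ 2 = s⁻¹ := by
    show ((Real.sqrt s)⁻¹) ^ 2 = s⁻¹
    rw [inv_pow, Real.sq_sqrt hs0.le]
  -- norm preservation
  have hv1 : ∑ j : Fin 2 × (Fin Mh × Fin Mv), Complex.normSq (v j) = 1 := by
    have hU : Rᴴ * R = 1 := by
      have := (Unitary.mem_iff.mp hR).1
      rwa [Matrix.star_eq_conjTranspose] at this
    have h1 : star v ⬝ᵥ v = star c ⬝ᵥ c := by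
      rw [hv_def, Matrix.star_mulVec, ← Matrix.dotProduct_mulVec, Matrix.mulVec_mulVec,
        hU, Matrix.one_mulVec]
    have h2 : ∀ x : Fin 2 × (Fin Mh × Fin Mv) → ℂ,
        star x ⬝ᵥ x = ((∑ j, Complex.normSq (x j) : ℝ) : ℂ) := by
      intro x
      simp only [dotProduct, Pi.star_apply, Complex.star_def, Complex.ofReal_sum]
      exact Finset.sum_congr rfl fun j _ => Complex.normSq_eq_conj_mul_self.symm
    rw [h2, h2, Complex.ofReal_inj] at h1
    have h3 : ∑ j, Complex.normSq (c j) = 1 := by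
      rw [← hc]; exact Finset.sum_congr rfl fun j _ => (Complex.sq_norm _).symm
    rw [h1, h3]
  -- the combined weights
  set w : Fin Mh × Fin Mv → ℂ := fun k => ρvv * v (0, k) + ρvh * v (1, k) with hw_def
  set u : Fin Mh × Fin Mv → ℂ :=
    fun k => (starRingEnd ℂ) ρvh * v (0, k) - (starRingEnd ℂ) ρvv * v (1, k) with hu_def
  set F : ℝ → ℝ → ℂ := fun ψaz ψel => ∑ k : Fin Mh × Fin Mv,
    w k * (Complex.exp (-(Complex.I * (ψaz:ℂ) * ((k.1 : ℕ):ℂ))) *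
      Complex.exp (-(Complex.I * (ψel:ℂ) * ((k.2 : ℕ):ℂ)))) with hF_def
  set K : ℝ := s⁻¹ * ((Mh : ℝ) * (Mv : ℝ))⁻¹ with hK_def
  -- pointwise identity for g
  have hconj : ∀ (M : ℕ) (ψ : ℝ) (i : Fin M), (starRingEnd ℂ) (arv M ψ i)
      = ((1 / Real.sqrt M : ℝ) : ℂ) * Complex.exp (-(Complex.I * (ψ:ℂ) * ((i:ℕ):ℂ))) := by
    intro M ψ i
    simp only [arv, _root_.map_mul, Complex.conj_ofReal]
    congr 1
    rw [← Complex.exp_conj]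
    congr 1
    simp only [_root_.map_mul, Complex.conj_I, Complex.conj_ofReal, map_natCast]
    ring
  have hg : ∀ ψaz ψel, g ψaz ψel = K * Complex.normSq (F ψaz ψel) := by
    intro ψaz ψel
    have hS : (∑ pk : Fin 2 × (Fin Mh × Fin Mv),
        (if pk.1 = 0 then ρvv else ρvh) *
          (starRingEnd ℂ) (arv Mh ψaz pk.2.1 * arv Mv ψel pk.2.2) * v pk)
        = ((1 / Real.sqrt Mh * (1 / Real.sqrt Mv) : ℝ) : ℂ) * F ψaz ψel := by
      rw [Fintype.sum_prod_type, Fin.sum_univ_two, hF_def]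
      simp only [Finset.mul_sum]
      rw [← Finset.sum_add_distrib]
      refine Finset.sum_congr rfl fun k _ => ?_
      rw [if_pos trivial, if_neg (show ¬(1:Fin 2) = 0 by decide),
        map_mul (starRingEnd ℂ), hconj, hconj]
      simp only [hw_def]
      push_cast
      ring
    show ‖_‖ ^ 2 = _
    rw [hS, Complex.sq_norm, _root_.map_mul, _root_.map_mul, Complex.normSq_ofReal,
      Complex.normSq_ofReal]
    have hMh0 : (0:ℝ) < Mh := by exact_mod_cast hMh
    have hMv0 : (0:ℝ) < Mv := by exact_mod_cast hMv
    have hcc : (1 / Real.sqrt Mh * (1 / Real.sqrt Mv)) * (1 / Real.sqrt Mh * (1 / Real.sqrt Mv))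
        = ((Mh : ℝ) * (Mv : ℝ))⁻¹ := by
      rw [div_mul_div_comm, div_mul_div_comm, one_mul, mul_mul_mul_comm,
        Real.mul_self_sqrt hMh0.le, Real.mul_self_sqrt hMv0.le]
      field_simp
    have hbb : b * b = s⁻¹ := by rw [← pow_two, hb2]
    rw [hK_def, ← hbb, ← hcc]
    ring
  -- conjugate of exponentials
  have hce : ∀ (ψ : ℝ) (n : ℕ), (starRingEnd ℂ) (Complex.exp (-(Complex.I * (ψ:ℂ) * (n:ℂ))))
      = Complex.exp (Complex.I * (ψ:ℂ) * (n:ℂ)) := by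
    intro ψ n
    rw [← Complex.exp_conj]
    congr 1
    simp only [map_neg, _root_.map_mul, Complex.conj_I, Complex.conj_ofReal, map_natCast]
    ring
  have contE : ∀ (n : ℕ), Continuous fun ψ : ℝ => Complex.exp (-(Complex.I * (ψ:ℂ) * (n:ℂ))) := by
    intro n; fun_prop
  have contE' : ∀ (n : ℕ), Continuous fun ψ : ℝ => Complex.exp (Complex.I * (ψ:ℂ) * (n:ℂ)) := by
    intro n; fun_prop
  -- expansion of |F|²
  have expand : ∀ ψaz ψel, F ψaz ψel * (starRingEnd ℂ) (F ψaz ψel)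
      = ∑ k : Fin Mh × Fin Mv, ∑ k' : Fin Mh × Fin Mv,
        (w k * (starRingEnd ℂ) (w k') *
          (Complex.exp (-(Complex.I * (ψaz:ℂ) * ((k.1:ℕ):ℂ))) *
            Complex.exp (Complex.I * (ψaz:ℂ) * ((k'.1:ℕ):ℂ)))) *
          (Complex.exp (-(Complex.I * (ψel:ℂ) * ((k.2:ℕ):ℂ))) *
            Complex.exp (Complex.I * (ψel:ℂ) * ((k'.2:ℕ):ℂ))) := by
    intro ψaz ψel
    rw [hF_def]
    simp only [map_sum, Finset.sum_mul_sum]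
    refine Finset.sum_congr rfl fun k _ => Finset.sum_congr rfl fun k' _ => ?_
    rw [map_mul (starRingEnd ℂ), map_mul (starRingEnd ℂ), hce, hce]
    ring
  -- inner integral
  have hinner : ∀ ψaz, (∫ ψel in (-Real.pi)..Real.pi, F ψaz ψel * (starRingEnd ℂ) (F ψaz ψel))
      = ∑ k : Fin Mh × Fin Mv, ∑ k' : Fin Mh × Fin Mv,
        (w k * (starRingEnd ℂ) (w k') *
          (Complex.exp (-(Complex.I * (ψaz:ℂ) * ((k.1:ℕ):ℂ))) *
            Complex.exp (Complex.I * (ψaz:ℂ) * ((k'.1:ℕ):ℂ)))) *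
          (if (k.2:ℕ) = ((k'.2:ℕ)) then ((2*Real.pi:ℝ):ℂ) else 0) := by
    intro ψaz
    rw [intervalIntegral.integral_congr (fun ψel _ => expand ψaz ψel)]
    rw [intervalIntegral.integral_finset_sum (fun k _ =>
      (Continuous.intervalIntegrable (by fun_prop) _ _))]
    refine Finset.sum_congr rfl fun k _ => ?_
    rw [intervalIntegral.integral_finset_sum (fun k' _ =>
      (Continuous.intervalIntegrable (by fun_prop) _ _))]
    refine Finset.sum_congr rfl fun k' _ => ?_
    rw [intervalIntegral.integral_const_mul, orth]
    push_cast
    ring_nf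
  -- outer integral of the inner result
  have houter : (∫ ψaz in (-Real.pi)..Real.pi,
        ∑ k : Fin Mh × Fin Mv, ∑ k' : Fin Mh × Fin Mv,
        (w k * (starRingEnd ℂ) (w k') *
          (Complex.exp (-(Complex.I * (ψaz:ℂ) * ((k.1:ℕ):ℂ))) *
            Complex.exp (Complex.I * (ψaz:ℂ) * ((k'.1:ℕ):ℂ)))) *
          (if (k.2:ℕ) = ((k'.2:ℕ)) then ((2*Real.pi:ℝ):ℂ) else 0))
      = ∑ k : Fin Mh × Fin Mv, ∑ k' : Fin Mh × Fin Mv,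
        (w k * (starRingEnd ℂ) (w k') *
          (if (k.2:ℕ) = ((k'.2:ℕ)) then ((2*Real.pi:ℝ):ℂ) else 0)) *
          (if (k.1:ℕ) = ((k'.1:ℕ)) then ((2*Real.pi:ℝ):ℂ) else 0) := by
    rw [intervalIntegral.integral_finset_sum (fun k _ =>
      (Continuous.intervalIntegrable (by fun_prop) _ _))]
    refine Finset.sum_congr rfl fun k _ => ?_
    rw [intervalIntegral.integral_finset_sum (fun k' _ =>
      (Continuous.intervalIntegrable (by fun_prop) _ _))]
    refine Finset.sum_congr rfl fun k' _ => ?_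
    have hrearr : (fun ψaz : ℝ =>
        (w k * (starRingEnd ℂ) (w k') *
          (Complex.exp (-(Complex.I * (ψaz:ℂ) * ((k.1:ℕ):ℂ))) *
            Complex.exp (Complex.I * (ψaz:ℂ) * ((k'.1:ℕ):ℂ)))) *
          (if (k.2:ℕ) = ((k'.2:ℕ)) then ((2*Real.pi:ℝ):ℂ) else 0))
        = fun ψaz : ℝ =>
        (w k * (starRingEnd ℂ) (w k') *
          (if (k.2:ℕ) = ((k'.2:ℕ)) then ((2*Real.pi:ℝ):ℂ) else 0)) *
          (Complex.exp (-(Complex.I * (ψaz:ℂ) * ((k.1:ℕ):ℂ))) *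
            Complex.exp (Complex.I * (ψaz:ℂ) * ((k'.1:ℕ):ℂ))) := by
      funext ψaz; ring
    rw [hrearr, intervalIntegral.integral_const_mul, orth]
    push_cast
    ring_nf
  -- diagonal extraction
  set T : ℝ := ∑ k : Fin Mh × Fin Mv, Complex.normSq (w k) with hT_def
  have hdiag : (∑ k : Fin Mh × Fin Mv, ∑ k' : Fin Mh × Fin Mv,
        (w k * (starRingEnd ℂ) (w k') *
          (if (k.2:ℕ) = ((k'.2:ℕ)) then ((2*Real.pi:ℝ):ℂ) else 0)) *
          (if (k.1:ℕ) = ((k'.1:ℕ)) then ((2*Real.pi:ℝ):ℂ) else 0))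
      = (((2*Real.pi)^2 * T : ℝ) : ℂ) := by
    have : ∀ k : Fin Mh × Fin Mv, (∑ k' : Fin Mh × Fin Mv,
        (w k * (starRingEnd ℂ) (w k') *
          (if (k.2:ℕ) = ((k'.2:ℕ)) then ((2*Real.pi:ℝ):ℂ) else 0)) *
          (if (k.1:ℕ) = ((k'.1:ℕ)) then ((2*Real.pi:ℝ):ℂ) else 0))
        = (((2*Real.pi)^2 * Complex.normSq (w k) : ℝ) : ℂ) := by
      intro k
      rw [Finset.sum_eq_single k]
      · rw [if_pos rfl, if_pos rfl, show w k * (starRingEnd ℂ) (w k) *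
          ((2*Real.pi:ℝ):ℂ) * ((2*Real.pi:ℝ):ℂ)
          = (w k * (starRingEnd ℂ) (w k)) * (((2*Real.pi:ℝ):ℂ) * ((2*Real.pi:ℝ):ℂ)) from by ring,
          Complex.mul_conj]
        push_cast
        ring
      · intro k' _ hk'
        by_cases h2 : (k.2:ℕ) = ((k'.2:ℕ))
        · have h1 : ¬(k.1:ℕ) = ((k'.1:ℕ)) := by
            intro h1
            exact hk' (Prod.ext (Fin.val_inj.mp h1).symm (Fin.val_inj.mp h2).symm)
          rw [if_neg h1, mul_zero]
        · rw [if_neg h2, mul_zero, zero_mul]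
      · intro h; exact absurd (Finset.mem_univ k) h
    rw [Finset.sum_congr rfl (fun k _ => this k), ← Complex.ofReal_sum, ← Finset.mul_sum,
      hT_def]
  have hMh0 : (0:ℝ) < Mh := by exact_mod_cast hMh
  have hMv0 : (0:ℝ) < Mv := by exact_mod_cast hMv
  -- value of the double integral
  have contF0 : ∀ ψaz, Continuous fun ψel => F ψaz ψel := by
    intro ψaz
    rw [hF_def]
    fun_prop
  have contF : ∀ ψaz, Continuous fun ψel => F ψaz ψel * (starRingEnd ℂ) (F ψaz ψel) := by
    intro ψaz
    exact (contF0 ψaz).mul (Complex.continuous_conj.comp (contF0 ψaz))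
  have hint : (∫ ψaz in (-Real.pi)..Real.pi, ∫ ψel in (-Real.pi)..Real.pi, g ψaz ψel)
      = K * ((2*Real.pi)^2 * T) := by
    have h1 : ∀ ψaz, (∫ ψel in (-Real.pi)..Real.pi, g ψaz ψel)
        = K * Complex.reCLM (∑ k : Fin Mh × Fin Mv, ∑ k' : Fin Mh × Fin Mv,
          (w k * (starRingEnd ℂ) (w k') *
            (Complex.exp (-(Complex.I * (ψaz:ℂ) * ((k.1:ℕ):ℂ))) *
              Complex.exp (Complex.I * (ψaz:ℂ) * ((k'.1:ℕ):ℂ)))) *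
            (if (k.2:ℕ) = ((k'.2:ℕ)) then ((2*Real.pi:ℝ):ℂ) else 0)) := by
      intro ψaz
      rw [intervalIntegral.integral_congr (fun ψel _ => hg ψaz ψel),
        intervalIntegral.integral_const_mul]
      congr 1
      have h2 : ∀ ψel ∈ Set.uIcc (-Real.pi) Real.pi, Complex.normSq (F ψaz ψel)
          = Complex.reCLM (F ψaz ψel * (starRingEnd ℂ) (F ψaz ψel)) := by
        intro ψel _
        rw [Complex.mul_conj]
        simp
      rw [intervalIntegral.integral_congr h2,
        ContinuousLinearMap.intervalIntegral_comp_comm _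
          (Continuous.intervalIntegrable (contF ψaz) _ _),
        hinner ψaz]
    rw [intervalIntegral.integral_congr (fun ψaz _ => h1 ψaz),
      intervalIntegral.integral_const_mul]
    congr 1
    rw [ContinuousLinearMap.intervalIntegral_comp_comm _
      (Continuous.intervalIntegrable (by fun_prop) _ _), houter, hdiag]
    simp only [Complex.reCLM_apply, Complex.ofReal_re]
  -- Lagrange identity summed
  have hws : T + (∑ k : Fin Mh × Fin Mv, Complex.normSq (u k)) = s := by
    have hs' : s = Complex.normSq ρvv + Complex.normSq ρvh := by
      rw [hs_def, Complex.sq_norm, Complex.sq_norm]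
    have hL : ∀ k : Fin Mh × Fin Mv, Complex.normSq (w k) + Complex.normSq (u k)
        = s * (Complex.normSq (v (0,k)) + Complex.normSq (v (1,k))) := by
      intro k
      rw [hw_def, hu_def, hs']
      exact lagrange ρvv ρvh (v (0,k)) (v (1,k))
    have hvsplit : ∑ k : Fin Mh × Fin Mv,
        (Complex.normSq (v (0,k)) + Complex.normSq (v (1,k))) = 1 := by
      rw [Finset.sum_add_distrib, ← hv1]
      exact (by rw [Fintype.sum_prod_type, Fin.sum_univ_two] :
        (∑ j : Fin 2 × (Fin Mh × Fin Mv), Complex.normSq (v j)) = _).symm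
    calc T + (∑ k : Fin Mh × Fin Mv, Complex.normSq (u k))
        = ∑ k : Fin Mh × Fin Mv, (Complex.normSq (w k) + Complex.normSq (u k)) := by
          rw [Finset.sum_add_distrib, hT_def]
      _ = ∑ k : Fin Mh × Fin Mv, s * (Complex.normSq (v (0,k)) + Complex.normSq (v (1,k))) :=
          Finset.sum_congr rfl fun k _ => hL k
      _ = s * ∑ k : Fin Mh × Fin Mv, (Complex.normSq (v (0,k)) + Complex.normSq (v (1,k))) := by
          rw [Finset.mul_sum]
      _ = s := by rw [hvsplit, mul_one]
  have hUnn : 0 ≤ ∑ k : Fin Mh × Fin Mv, Complex.normSq (u k) :=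
    Finset.sum_nonneg fun k _ => Complex.normSq_nonneg _
  have hTle : T ≤ s := by linarith
  have hTiff : T = s ↔ ∀ k, u k = 0 := by
    constructor
    · intro hT k
      have h0 : ∑ k : Fin Mh × Fin Mv, Complex.normSq (u k) = 0 := by linarith
      have := (Finset.sum_eq_zero_iff_of_nonneg
        (fun i _ => Complex.normSq_nonneg (u i))).mp h0 k (Finset.mem_univ k)
      exact Complex.normSq_eq_zero.mp this
    · intro h
      have h0 : ∑ k : Fin Mh × Fin Mv, Complex.normSq (u k) = 0 :=
        Finset.sum_eq_zero fun k _ => by rw [h k, Complex.normSq_zero]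
      linarith
  -- span characterization
  have hconjne : ∀ z : ℂ, z ≠ 0 → (starRingEnd ℂ) z ≠ 0 := by
    intro z hz h
    exact hz (by simpa using congrArg (starRingEnd ℂ) h)
  have heval : ∀ (α : Fin Mh × Fin Mv → ℂ) (pk : Fin 2 × (Fin Mh × Fin Mv)),
      (∑ ℓ : Fin Mh × Fin Mv, α ℓ • (fun pk' : Fin 2 × (Fin Mh × Fin Mv) =>
        (if pk'.1 = 0 then (starRingEnd ℂ) ρvv else (starRingEnd ℂ) ρvh) *
          (if pk'.2 = ℓ then (1:ℂ) else 0))) pk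
        = α pk.2 * (if pk.1 = 0 then (starRingEnd ℂ) ρvv else (starRingEnd ℂ) ρvh) := by
    intro α pk
    rw [Finset.sum_apply]
    simp only [Pi.smul_apply, smul_eq_mul, mul_ite, mul_one, mul_zero]
    rw [Finset.sum_ite_eq]
    simp [mul_ite]
  have hspan : (v ∈ Submodule.span ℂ (Set.range fun ℓ : Fin Mh × Fin Mv =>
        fun pk : Fin 2 × (Fin Mh × Fin Mv) =>
          (if pk.1 = 0 then (starRingEnd ℂ) ρvv else (starRingEnd ℂ) ρvh) *
            (if pk.2 = ℓ then (1 : ℂ) else 0)))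
      ↔ ∀ k, u k = 0 := by
    rw [Submodule.mem_span_range_iff_exists_fun]
    constructor
    · rintro ⟨α, hα⟩ k
      have h0 := congrFun hα ((0 : Fin 2), k)
      have h1 := congrFun hα ((1 : Fin 2), k)
      rw [heval] at h0 h1
      simp at h0 h1
      rw [hu_def]
      simp only []
      rw [← h0, ← h1]
      ring
    · intro h
      refine ⟨fun k => if ρvv = 0 then v (1,k) / (starRingEnd ℂ) ρvh
        else v (0,k) / (starRingEnd ℂ) ρvv, ?_⟩
      funext pk
      rw [heval]
      obtain ⟨p, k⟩ := pk
      have huk := h k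
      rw [hu_def] at huk
      simp only [] at huk
      have huk' : (starRingEnd ℂ) ρvh * v (0,k) = (starRingEnd ℂ) ρvv * v (1,k) :=
        sub_eq_zero.mp huk
      fin_cases p
      · simp only [Fin.zero_eta, Fin.isValue]
        rw [if_pos trivial]
        by_cases hvv : ρvv = 0
        · have hvh : ρvh ≠ 0 := by
            rcases hρ' with h' | h'
            · exact absurd hvv h'
            · exact h'
          rw [if_pos hvv, hvv, map_zero, mul_zero]
          have : (starRingEnd ℂ) ρvh * v (0,k) = 0 := by
            rw [huk', hvv, map_zero, zero_mul]
          exact ((mul_eq_zero.mp this).resolve_left (hconjne _ hvh)).symm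
        · rw [if_neg hvv, div_mul_cancel₀ _ (hconjne _ hvv)]
      · simp only [Fin.mk_one, Fin.isValue]
        rw [if_neg (by decide : ¬((1 : Fin 2) = 0))]
        by_cases hvv : ρvv = 0
        · have hvh : ρvh ≠ 0 := by
            rcases hρ' with h' | h'
            · exact absurd hvv h'
            · exact h'
          rw [if_pos hvv, div_mul_cancel₀ _ (hconjne _ hvh)]
        · rw [if_neg hvv]
          have hcne := hconjne _ hvv
          rw [div_mul_eq_mul_div, div_eq_iff hcne]
          linear_combination huk'
  -- final assembly
  have hMM : (0:ℝ) < (Mh:ℝ) * Mv := by positivity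
  have hrw : K * ((2*Real.pi)^2 * T) = (2*Real.pi)^2/((Mh:ℝ)*Mv) * (T / s) := by
    rw [hK_def, show (2*Real.pi)^2/((Mh:ℝ)*Mv) * (T/s)
      = ((2*Real.pi)^2) * T * (((Mh:ℝ)*Mv)⁻¹ * s⁻¹) from by
        rw [div_eq_mul_inv, div_eq_mul_inv]; ring, mul_inv]
    ring
  have hApos : 0 < (2*Real.pi)^2/((Mh:ℝ)*Mv) := by positivity
  constructor
  · rw [hint, hrw]
    calc (2*Real.pi)^2/((Mh:ℝ)*Mv) * (T / s)
        ≤ (2*Real.pi)^2/((Mh:ℝ)*Mv) * 1 :=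
          mul_le_mul_of_nonneg_left ((div_le_one hs0).mpr hTle) hApos.le
      _ = (2*Real.pi)^2/((Mh:ℝ)*Mv) := mul_one _
  · rw [hint, hrw, hspan, ← hTiff]
    constructor
    · intro hEq
      have : T / s = 1 := by
        have := mul_left_cancel₀ (ne_of_gt hApos) (hEq.trans (mul_one _).symm)
        exact this
      field_simp at this
      exact this
    · intro hT
      rw [hT, div_self (ne_of_gt hs0), mul_one]
end

section
/- Let m, N ∈ ℕ, let D ∈ ℂ^{m×N}, let g ∈ ℂ^N, let ρ_vv, ρ_vh ∈ ℂ with (ρ_vv, ρ_vh) ≠ (0,0), b = (|ρ_vv|² + |ρ_vh|²)^{−1/2}, and let A = [ρ_vv, ρ_vh] be the 1×2 row vector. Then sup { |g^H (A ⊗ D^H) c|² / ‖(A ⊗ D^H) c‖₂² : c ∈ ℂ^{2m}, (A ⊗ D^H) c ≠ 0 } = sup { |g^H D^H μ|² / ‖D^H μ‖₂² : μ ∈ ℂ^{m}, D^H μ ≠ 0 }, and for every unit-norm μ ∈ ℂ^m attaining the right-hand supremum, the unit-norm vector c = b ([ρ_vv*, ρ_vh*]ᵀ ⊗ μ) attains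 the left-hand supremum. -/
open Complex Matrix

/- STATEMENT 7: SE reduction (equations (39)–(44)).  With `A = [ρ_vv, ρ_vh]`,
`(ρ_vv, ρ_vh) ≠ (0,0)` and `b = (|ρ_vv|²+|ρ_vh|²)^{−1/2}`, the supremum of
`|g^H (A ⊗ D^H) c|² / ‖(A ⊗ D^H) c‖₂²` over `c ∈ ℂ^{2m}` with `(A ⊗ D^H) c ≠ 0`
equals the supremum of `|g^H D^H μ|² / ‖D^H μ‖₂²` over `μ ∈ ℂ^m` with `D^H μ ≠ 0`,
and every unit-norm maximizer `μ` of the latter yields the unit-norm maximizer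
`c = b ([ρ_vv*, ρ_vh*]ᵀ ⊗ μ)` of the former. -/
theorem stmt_7 (m N : ℕ) (D : Matrix (Fin m) (Fin N) ℂ) (g : Fin N → ℂ)
    (ρvv ρvh : ℂ) (hρ : (ρvv, ρvh) ≠ (0, 0)) :
    let b : ℝ := (Real.sqrt (‖ρvv‖ ^ 2 + ‖ρvh‖ ^ 2))⁻¹
    let vecA : ((Fin 2 × Fin m) → ℂ) → (Fin N → ℂ) := fun c n =>
      ∑ pi : Fin 2 × Fin m,
        (if pi.1 = 0 then ρvv else ρvh) * (starRingEnd ℂ) (D pi.2 n) * c pi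
    let vecB : (Fin m → ℂ) → (Fin N → ℂ) := fun μ n =>
      ∑ i : Fin m, (starRingEnd ℂ) (D i n) * μ i
    let ratio : (Fin N → ℂ) → ℝ := fun w =>
      ‖∑ n : Fin N, (starRingEnd ℂ) (g n) * w n‖ ^ 2 /
        ∑ n : Fin N, ‖w n‖ ^ 2
    sSup {r : ℝ | ∃ c : (Fin 2 × Fin m) → ℂ, vecA c ≠ 0 ∧ r = ratio (vecA c)}
        = sSup {r : ℝ | ∃ μ : Fin m → ℂ, vecB μ ≠ 0 ∧ r = ratio (vecB μ)} ∧
    (∀ μ : Fin m → ℂ, (∑ i : Fin m, ‖μ i‖ ^ 2 = 1) →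
      vecB μ ≠ 0 →
      (∀ μ' : Fin m → ℂ, vecB μ' ≠ 0 → ratio (vecB μ') ≤ ratio (vecB μ)) →
      let c0 : (Fin 2 × Fin m) → ℂ := fun pi =>
        (b : ℂ) * ((if pi.1 = 0 then (starRingEnd ℂ) ρvv else (starRingEnd ℂ) ρvh) * μ pi.2)
      (∑ j : Fin 2 × Fin m, ‖c0 j‖ ^ 2 = 1) ∧
      vecA c0 ≠ 0 ∧
      ∀ c : (Fin 2 × Fin m) → ℂ, vecA c ≠ 0 → ratio (vecA c) ≤ ratio (vecA c0)) := by
  intro b vecA vecB ratio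
  have hρ' : ρvv ≠ 0 ∨ ρvh ≠ 0 := by
    by_contra h
    push_neg at h
    exact hρ (by simp [h.1, h.2])
  set s : ℝ := ‖ρvv‖ ^ 2 + ‖ρvh‖ ^ 2 with hs_def
  have hs : 0 < s := by
    rcases hρ' with h | h
    · have h1 : 0 < ‖ρvv‖ ^ 2 := pow_pos (norm_pos_iff.mpr h) 2
      have h2 : 0 ≤ ‖ρvh‖ ^ 2 := sq_nonneg _
      linarith
    · have h1 : 0 < ‖ρvh‖ ^ 2 := pow_pos (norm_pos_iff.mpr h) 2
      have h2 : 0 ≤ ‖ρvv‖ ^ 2 := sq_nonneg _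
      linarith
  have hsC : ρvv * (starRingEnd ℂ) ρvv + ρvh * (starRingEnd ℂ) ρvh = (s : ℂ) := by
    rw [Complex.mul_conj, Complex.mul_conj, hs_def]
    push_cast [← Complex.sq_norm]
    ring
  -- key: vecA c = vecB μ_c
  have key : ∀ c : (Fin 2 × Fin m) → ℂ,
      vecA c = vecB (fun i => ρvv * c (0, i) + ρvh * c (1, i)) := by
    intro c
    funext n
    show (∑ pi : Fin 2 × Fin m, _) = _
    rw [Fintype.sum_prod_type]
    simp only [Fin.sum_univ_two]
    simp only [vecB]
    rw [← Finset.sum_add_distrib]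
    refine Finset.sum_congr rfl fun i _ => ?_
    simp
    ring
  -- ratio scale invariance
  have hratio : ∀ (k : ℂ) (w : Fin N → ℂ), k ≠ 0 →
      ratio (fun n => k * w n) = ratio w := by
    intro k w hk
    simp only [ratio]
    have h1 : ∑ n : Fin N, (starRingEnd ℂ) (g n) * (k * w n)
        = k * ∑ n : Fin N, (starRingEnd ℂ) (g n) * w n := by
      rw [Finset.mul_sum]; exact Finset.sum_congr rfl fun n _ => by ring
    have h2 : ∑ n : Fin N, ‖k * w n‖ ^ 2
        = ‖k‖ ^ 2 * ∑ n : Fin N, ‖w n‖ ^ 2 := by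
      rw [Finset.mul_sum]
      exact Finset.sum_congr rfl fun n _ => by rw [norm_mul]; ring
    have hk2 : ‖k‖ ^ 2 ≠ 0 := pow_ne_zero 2 (norm_ne_zero_iff.mpr hk)
    rw [h1, h2, norm_mul, mul_pow, mul_div_mul_left _ _ hk2]
  have hscale : ∀ (k : ℂ) (μ : Fin m → ℂ),
      vecB (fun i => k * μ i) = fun n => k * vecB μ n := by
    intro k μ
    funext n
    simp only [vecB, Finset.mul_sum]
    exact Finset.sum_congr rfl fun i _ => by ring
  have hne : ∀ (k : ℂ) (w : Fin N → ℂ), k ≠ 0 → w ≠ 0 → (fun n => k * w n) ≠ 0 := by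
    intro k w hk hw hcon
    apply hw
    funext n
    have := congrFun hcon n
    simp only [Pi.zero_apply, mul_eq_zero] at this ⊢
    tauto
  constructor
  · -- set equality
    congr 1
    ext r
    constructor
    · rintro ⟨c, hc, rfl⟩
      exact ⟨fun i => ρvv * c (0, i) + ρvh * c (1, i), by rw [← key]; exact hc,
        by rw [key]⟩
    · rintro ⟨μ, hμ, rfl⟩
      set c' : (Fin 2 × Fin m) → ℂ := fun pi =>
        (if pi.1 = 0 then (starRingEnd ℂ) ρvv else (starRingEnd ℂ) ρvh) * μ pi.2 / (s : ℂ)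
        with hc'_def
      have heq : (fun i => ρvv * c' (0, i) + ρvh * c' (1, i)) = μ := by
        funext i
        have e0 : c' (0, i) = (starRingEnd ℂ) ρvv * μ i / (s : ℂ) := by simp [hc'_def]
        have e1 : c' (1, i) = (starRingEnd ℂ) ρvh * μ i / (s : ℂ) := by simp [hc'_def]
        rw [e0, e1,
          show ρvv * ((starRingEnd ℂ) ρvv * μ i / (s:ℂ)) + ρvh * ((starRingEnd ℂ) ρvh * μ i / (s:ℂ))
            = ((ρvv * (starRingEnd ℂ) ρvv + ρvh * (starRingEnd ℂ) ρvh) * μ i) / (s:ℂ) by ring,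
          hsC, mul_comm, mul_div_assoc,
          div_self (show (s : ℂ) ≠ 0 by exact_mod_cast hs.ne'), mul_one]
      refine ⟨c', ?_, ?_⟩
      · rw [key, heq]; exact hμ
      · rw [key, heq]
  · -- maximizer part
    intro μ hnorm hμ hmax c0
    have hbpos : 0 < b := inv_pos.mpr (Real.sqrt_pos.mpr hs)
    have hb2 : b ^ 2 * s = 1 := by
      show ((Real.sqrt s)⁻¹) ^ 2 * s = 1
      rw [inv_pow, Real.sq_sqrt hs.le]
      exact inv_mul_cancel₀ hs.ne'
    have e0 : ∀ i, c0 (0, i) = (b : ℂ) * ((starRingEnd ℂ) ρvv * μ i) := fun i => by simp [c0]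
    have e1 : ∀ i, c0 (1, i) = (b : ℂ) * ((starRingEnd ℂ) ρvh * μ i) := fun i => by simp [c0]
    have habs : ∀ (z w : ℂ), ‖(b : ℂ) * ((starRingEnd ℂ) z * w)‖ ^ 2
        = b ^ 2 * ‖z‖ ^ 2 * ‖w‖ ^ 2 := by
      intro z w
      rw [norm_mul, norm_mul, Complex.norm_real, Real.norm_eq_abs, Complex.norm_conj,
        abs_of_pos hbpos]
      ring
    have hc0eq : (fun i => ρvv * c0 (0, i) + ρvh * c0 (1, i))
        = fun i => ((b : ℂ) * (s : ℂ)) * μ i := by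
      funext i
      rw [e0, e1]
      rw [show ρvv * ((b:ℂ) * ((starRingEnd ℂ) ρvv * μ i)) + ρvh * ((b:ℂ) * ((starRingEnd ℂ) ρvh * μ i))
        = (b:ℂ) * ((ρvv * (starRingEnd ℂ) ρvv + ρvh * (starRingEnd ℂ) ρvh) * μ i) by ring, hsC]
      ring
    have hA0 : vecA c0 = fun n => ((b : ℂ) * (s : ℂ)) * vecB μ n := by
      rw [key, hc0eq, hscale]
    have hbsne : ((b : ℂ) * (s : ℂ)) ≠ 0 := by
      simp only [ne_eq, mul_eq_zero, Complex.ofReal_eq_zero, not_or]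
      exact ⟨hbpos.ne', hs.ne'⟩
    refine ⟨?_, ?_, ?_⟩
    · -- unit norm of c0
      rw [Fintype.sum_prod_type, Fin.sum_univ_two]
      have hsum : ∀ a : ℝ, ∑ i : Fin m, a * ‖μ i‖ ^ 2 = a := by
        intro a
        rw [← Finset.mul_sum, hnorm, mul_one]
      calc (∑ i : Fin m, ‖c0 (0, i)‖ ^ 2)
            + ∑ i : Fin m, ‖c0 (1, i)‖ ^ 2
          = (∑ i : Fin m, (b ^ 2 * ‖ρvv‖ ^ 2) * ‖μ i‖ ^ 2)
            + ∑ i : Fin m, (b ^ 2 * ‖ρvh‖ ^ 2) * ‖μ i‖ ^ 2 := by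
            congr 1 <;> refine Finset.sum_congr rfl fun i _ => ?_
            · rw [e0, habs]
            · rw [e1, habs]
        _ = b ^ 2 * ‖ρvv‖ ^ 2 + b ^ 2 * ‖ρvh‖ ^ 2 := by
            rw [hsum, hsum]
        _ = 1 := by rw [hs_def] at hb2; linarith
    · rw [hA0]
      exact hne _ _ hbsne hμ
    · intro c hc
      rw [hA0, hratio _ _ hbsne]
      rw [key] at hc ⊢
      exact hmax _ hc
end

section
/- Let m, L ∈ ℕ, let D₁ ∈ ℂ^{m×L}, let ρ_vv, ρ_vh ∈ ℂ with (ρ_vv, ρ_vh) ≠ (0,0), b = (|ρ_vv|² + |ρ_vh|²)^{−1/2}, and let A = [ρ_vv, ρ_vh]. Then the maximum of ‖(A ⊗ D₁^H) c‖₂² over all unit-norm c ∈ ℂ^{2m} equals (|ρ_vv|² + |ρ_vh|²) · λ_max(D₁ D₁^H), where λ_max denotes the largest eigenvalue of the positive semidefinite Hermitian matrix D₁ D₁^H, and the maximum is attained by c = b ([ρ_vv*, ρ_vh*]ᵀ ⊗ w) for any unit-norm eigenvector w of D₁ D₁^H associated with λ_max. -/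
open Complex Matrix

lemma conj_mul_self_eq (z : ℂ) :
    (starRingEnd ℂ) z * z = ((‖z‖ ^ 2 : ℝ) : ℂ) := by
  rw [← Complex.normSq_eq_conj_mul_self, Complex.sq_norm]

lemma hdot {k : ℕ} (v : Fin k → ℂ) :
    star v ⬝ᵥ v = ((∑ i, ‖(v i)‖ ^ 2 : ℝ) : ℂ) := by
  rw [Complex.ofReal_sum]
  simp only [dotProduct, Pi.star_apply, Complex.star_def, conj_mul_self_eq]

lemma inner_rw {m : ℕ} (ρvv ρvh : ℂ) (d : Fin m → ℂ) (c : Fin 2 × Fin m → ℂ) :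
    ∑ pi : Fin 2 × Fin m, (if pi.1 = 0 then ρvv else ρvh) * d pi.2 * c pi
      = ∑ i, d i * (ρvv * c (0, i) + ρvh * c (1, i)) := by
  rw [Fintype.sum_prod_type, Fin.sum_univ_two, ← Finset.sum_add_distrib]
  congr 1
  funext i
  norm_num
  ring

lemma cs2 (ρ1 ρ2 a b : ℂ) :
    ‖(ρ1 * a + ρ2 * b)‖ ^ 2
      ≤ (‖ρ1‖ ^ 2 + ‖ρ2‖ ^ 2) * (‖a‖ ^ 2 + ‖b‖ ^ 2) := by
  have hadd : ‖(ρ1 * a + ρ2 * b)‖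
      ≤ ‖ρ1‖ * ‖a‖ + ‖ρ2‖ * ‖b‖ := by
    simpa [_root_.map_mul] using norm_add_le (ρ1 * a) (ρ2 * b)
  nlinarith [norm_nonneg (ρ1 * a + ρ2 * b), norm_nonneg ρ1,
    norm_nonneg ρ2, norm_nonneg a, norm_nonneg b,
    sq_nonneg (‖ρ1‖ * ‖b‖ - ‖ρ2‖ * ‖a‖)]

lemma quad_eq {m L : ℕ} (D1 : Matrix (Fin m) (Fin L) ℂ) (u : Fin m → ℂ) :
    star u ⬝ᵥ ((D1 * D1ᴴ) *ᵥ u)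
      = ((∑ l, ‖((D1ᴴ *ᵥ u) l)‖ ^ 2 : ℝ) : ℂ) := by
  rw [← mulVec_mulVec, dotProduct_mulVec, show star u ᵥ* D1 = star (D1ᴴ *ᵥ u) by
    rw [star_mulVec, conjTranspose_conjTranspose]]
  exact hdot _

lemma rayleigh {m : ℕ} {M : Matrix (Fin m) (Fin m) ℂ} (hM : M.IsHermitian) (lam : ℝ)
    (hub : ∀ i : Fin m, hM.eigenvalues i ≤ lam) (u : Fin m → ℂ) :
    (star u ⬝ᵥ M *ᵥ u).re ≤ lam * ∑ i, ‖(u i)‖ ^ 2 := by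
  set U : Matrix (Fin m) (Fin m) ℂ := (hM.eigenvectorUnitary : Matrix (Fin m) (Fin m) ℂ) with hU
  set y : Fin m → ℂ := (star U) *ᵥ u with hy
  have hsy : star y = star u ᵥ* U := by
    rw [hy, star_mulVec, ← star_eq_conjTranspose, star_star]
  have h1 : star u ⬝ᵥ M *ᵥ u
      = star y ⬝ᵥ ((diagonal (RCLike.ofReal ∘ hM.eigenvalues)) *ᵥ y) := by
    conv_lhs => rw [hM.spectral_theorem, Unitary.conjStarAlgAut_apply]
    rw [← mulVec_mulVec, ← mulVec_mulVec, dotProduct_mulVec, hsy]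
  have h2 : star y ⬝ᵥ y = star u ⬝ᵥ u := by
    rw [hsy, hy, dotProduct_mulVec, vecMul_vecMul,
      show U * star U = 1 from Unitary.coe_mul_star_self hM.eigenvectorUnitary, vecMul_one]
  have h3 : (star u ⬝ᵥ M *ᵥ u).re = ∑ i, hM.eigenvalues i * ‖(y i)‖ ^ 2 := by
    rw [h1]
    simp only [dotProduct, Pi.star_apply, mulVec_diagonal, Function.comp_apply]
    rw [Complex.re_sum]
    congr 1
    funext i
    rw [show (RCLike.ofReal (hM.eigenvalues i) : ℂ) = ((hM.eigenvalues i : ℝ) : ℂ) from rfl,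
      Complex.star_def, mul_left_comm, conj_mul_self_eq, ← Complex.ofReal_mul]
    exact Complex.ofReal_re _
  have h5 : ∑ i, ‖(y i)‖ ^ 2 = ∑ i, ‖(u i)‖ ^ 2 := by
    have := (hdot y).symm.trans (h2.trans (hdot u))
    exact_mod_cast this
  rw [h3]
  calc ∑ i, hM.eigenvalues i * ‖(y i)‖ ^ 2
      ≤ ∑ i, lam * ‖(y i)‖ ^ 2 :=
        Finset.sum_le_sum fun i _ =>
          mul_le_mul_of_nonneg_right (hub i) (by positivity)
    _ = lam * ∑ i, ‖(y i)‖ ^ 2 := (Finset.mul_sum _ _ _).symm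
    _ = lam * ∑ i, ‖(u i)‖ ^ 2 := by rw [h5]

/- STATEMENT 8: MIP beamformer optimization.  With `A = [ρ_vv, ρ_vh]`,
`(ρ_vv, ρ_vh) ≠ (0,0)`, `b = (|ρ_vv|²+|ρ_vh|²)^{−1/2}`, and `lam` the largest
eigenvalue of the positive semidefinite Hermitian matrix `D₁D₁^H`, the maximum of
`‖(A ⊗ D₁^H) c‖₂²` over unit-norm `c ∈ ℂ^{2m}` equals `(|ρ_vv|²+|ρ_vh|²)·lam`, and it
is attained by `c = b ([ρ_vv*, ρ_vh*]ᵀ ⊗ w)` for any unit-norm eigenvector `w` of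
`D₁D₁^H` for `lam`. -/
theorem stmt_8 (m L : ℕ) (D1 : Matrix (Fin m) (Fin L) ℂ)
    (ρvv ρvh : ℂ) (hρ : (ρvv, ρvh) ≠ (0, 0))
    (lam : ℝ)
    (hlam1 : ∃ v : Fin m → ℂ, v ≠ 0 ∧ (D1 * D1ᴴ).mulVec v = (lam : ℂ) • v)
    (hlam2 : ∀ μ : ℝ,
      (∃ v : Fin m → ℂ, v ≠ 0 ∧ (D1 * D1ᴴ).mulVec v = (μ : ℂ) • v) → μ ≤ lam) :
    let b : ℝ := (Real.sqrt (‖ρvv‖ ^ 2 + ‖ρvh‖ ^ 2))⁻¹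
    let F : ((Fin 2 × Fin m) → ℂ) → ℝ := fun c =>
      ∑ l : Fin L, ‖(∑ pi : Fin 2 × Fin m,
        (if pi.1 = 0 then ρvv else ρvh) * (starRingEnd ℂ) (D1 pi.2 l) * c pi)‖ ^ 2
    (∀ c : (Fin 2 × Fin m) → ℂ, (∑ j : Fin 2 × Fin m, ‖(c j)‖ ^ 2 = 1) →
        F c ≤ (‖ρvv‖ ^ 2 + ‖ρvh‖ ^ 2) * lam) ∧
    (∀ w : Fin m → ℂ, (∑ i : Fin m, ‖(w i)‖ ^ 2 = 1) →
      (D1 * D1ᴴ).mulVec w = (lam : ℂ) • w →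
      (∑ j : Fin 2 × Fin m, ‖((b : ℂ) * ((if j.1 = 0 then (starRingEnd ℂ) ρvv else (starRingEnd ℂ) ρvh) * w j.2))‖ ^ 2
        = 1) ∧
      F (fun pi : Fin 2 × Fin m =>
          (b : ℂ) * ((if pi.1 = 0 then (starRingEnd ℂ) ρvv else (starRingEnd ℂ) ρvh) * w pi.2))
        = (‖ρvv‖ ^ 2 + ‖ρvh‖ ^ 2) * lam) := by
  intro b F
  have hM : (D1 * D1ᴴ).IsHermitian := isHermitian_mul_conjTranspose_self D1
  set S : ℝ := ‖ρvv‖ ^ 2 + ‖ρvh‖ ^ 2 with hSdef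
  have hS : 0 < S := by
    have hne : ρvv ≠ 0 ∨ ρvh ≠ 0 := by
      by_contra h
      push_neg at h
      exact hρ (by rw [h.1, h.2])
    rcases hne with h | h
    · have : 0 < ‖ρvv‖ ^ 2 := pow_pos (norm_pos_iff.mpr h) 2
      nlinarith [sq_nonneg (‖ρvh‖)]
    · have : 0 < ‖ρvh‖ ^ 2 := pow_pos (norm_pos_iff.mpr h) 2
      nlinarith [sq_nonneg (‖ρvv‖)]
  have hub : ∀ i : Fin m, hM.eigenvalues i ≤ lam := by
    intro i
    refine hlam2 _ ⟨(hM.eigenvectorBasis i : Fin m → ℂ),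
      (WithLp.ofLp_eq_zero 2).ne.2 <| hM.eigenvectorBasis.orthonormal.ne_zero i,
      (hM.mulVec_eigenvectorBasis i).trans ?_⟩
    funext j
    simp [Complex.real_smul]
  have hlam0 : 0 ≤ lam := by
    obtain ⟨v, hv0, hveq⟩ := hlam1
    have hq := quad_eq D1 v
    rw [hveq, dotProduct_smul, hdot, smul_eq_mul, ← Complex.ofReal_mul] at hq
    have hq' : lam * (∑ i, ‖(v i)‖ ^ 2)
        = ∑ l, ‖((D1ᴴ *ᵥ v) l)‖ ^ 2 := by exact_mod_cast hq
    obtain ⟨i, hi⟩ := Function.ne_iff.mp hv0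
    have hvpos : 0 < ∑ i, ‖(v i)‖ ^ 2 :=
      Finset.sum_pos' (fun j _ => by positivity)
        ⟨i, Finset.mem_univ i, pow_pos (norm_pos_iff.mpr hi) 2⟩
    have hQ0 : 0 ≤ ∑ l, ‖((D1ᴴ *ᵥ v) l)‖ ^ 2 := by positivity
    nlinarith
  constructor
  · -- upper bound
    intro c hc
    set u : Fin m → ℂ := fun i => ρvv * c (0, i) + ρvh * c (1, i) with hu
    have hFA : F c = ∑ l, ‖((D1ᴴ *ᵥ u) l)‖ ^ 2 := by
      unfold F
      refine Finset.sum_congr rfl fun l _ => ?_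
      congr 1
      rw [inner_rw ρvv ρvh (fun i => (starRingEnd ℂ) (D1 i l)) c]
      simp [mulVec, dotProduct, conjTranspose_apply, hu, mul_comm]
    have hkey : (∑ l, ‖((D1ᴴ *ᵥ u) l)‖ ^ 2)
        = (star u ⬝ᵥ (D1 * D1ᴴ) *ᵥ u).re := by
      rw [quad_eq]
      exact (Complex.ofReal_re _).symm
    have h1 := rayleigh hM lam hub u
    have h2 : ∑ i, ‖(u i)‖ ^ 2 ≤ S := by
      have hsum : ∑ j : Fin 2 × Fin m, ‖(c j)‖ ^ 2
          = ∑ i, (‖(c (0, i))‖ ^ 2 + ‖(c (1, i))‖ ^ 2) := by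
        rw [Fintype.sum_prod_type, Fin.sum_univ_two, ← Finset.sum_add_distrib]
      calc ∑ i, ‖(u i)‖ ^ 2
          ≤ ∑ i, S * (‖(c (0, i))‖ ^ 2 + ‖(c (1, i))‖ ^ 2) :=
            Finset.sum_le_sum fun i _ => cs2 ρvv ρvh (c (0, i)) (c (1, i))
        _ = S * ∑ i, (‖(c (0, i))‖ ^ 2 + ‖(c (1, i))‖ ^ 2) :=
            (Finset.mul_sum _ _ _).symm
        _ = S * 1 := by rw [← hsum, hc]
        _ = S := mul_one S
    calc F c = (star u ⬝ᵥ (D1 * D1ᴴ) *ᵥ u).re := by rw [hFA, hkey]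
      _ ≤ lam * ∑ i, ‖(u i)‖ ^ 2 := h1
      _ ≤ lam * S := mul_le_mul_of_nonneg_left h2 hlam0
      _ = S * lam := mul_comm _ _
  · -- attainment
    intro w hw hweq
    have hb0 : 0 ≤ b := by
      unfold b
      positivity
    have hb2 : b ^ 2 * S = 1 := by
      unfold b
      rw [← hSdef, inv_pow, Real.sq_sqrt hS.le]
      exact inv_mul_cancel₀ hS.ne'
    have hQ : (∑ l, ‖((D1ᴴ *ᵥ w) l)‖ ^ 2) = lam := by
      have hq := quad_eq D1 w
      rw [hweq, dotProduct_smul, hdot, hw, smul_eq_mul] at hq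
      have : (lam : ℂ) = ((∑ l, ‖((D1ᴴ *ᵥ w) l)‖ ^ 2 : ℝ) : ℂ) := by
        simpa using hq
      exact_mod_cast this.symm
    constructor
    · -- unit norm
      have habs : ∀ (p : Fin 2) (i : Fin m),
          ‖((b : ℂ) *
            ((if p = 0 then (starRingEnd ℂ) ρvv else (starRingEnd ℂ) ρvh) * w i))‖ ^ 2
          = b ^ 2 * (if p = 0 then ‖ρvv‖ else ‖ρvh‖) ^ 2
              * ‖(w i)‖ ^ 2 := by
        intro p i
        fin_cases p <;>
          · simp [_root_.map_mul, Complex.norm_real, Real.norm_eq_abs, _root_.abs_of_nonneg hb0, mul_pow,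
              Complex.norm_conj]
            ring
      rw [Fintype.sum_prod_type]
      calc ∑ p : Fin 2, ∑ i, ‖((b : ℂ) *
              ((if (p, i).1 = 0 then (starRingEnd ℂ) ρvv else (starRingEnd ℂ) ρvh) * w (p, i).2))‖ ^ 2
          = ∑ p : Fin 2, b ^ 2 * (if p = 0 then ‖ρvv‖ else ‖ρvh‖) ^ 2 := by
            refine Finset.sum_congr rfl fun p _ => ?_
            rw [show ∑ i, ‖((b : ℂ) *
                ((if (p, i).1 = 0 then (starRingEnd ℂ) ρvv else (starRingEnd ℂ) ρvh) * w (p, i).2))‖ ^ 2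
              = ∑ i, b ^ 2 * (if p = 0 then ‖ρvv‖ else ‖ρvh‖) ^ 2
                  * ‖(w i)‖ ^ 2 from Finset.sum_congr rfl fun i _ => habs p i,
              ← Finset.mul_sum, hw, mul_one]
        _ = 1 := by
            rw [Fin.sum_univ_two, if_pos rfl, if_neg (by decide : ¬ ((1 : Fin 2) = 0))]
            have h := hb2
            rw [hSdef] at h
            linear_combination h
    · -- value
      unfold F
      have hinner : ∀ l : Fin L,
          (∑ pi : Fin 2 × Fin m, (if pi.1 = 0 then ρvv else ρvh) *
            (starRingEnd ℂ) (D1 pi.2 l) *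
            ((b : ℂ) * ((if pi.1 = 0 then (starRingEnd ℂ) ρvv else (starRingEnd ℂ) ρvh) * w pi.2)))
          = ((b * S : ℝ) : ℂ) * (D1ᴴ *ᵥ w) l := by
        intro l
        rw [inner_rw ρvv ρvh (fun i => (starRingEnd ℂ) (D1 i l))
          (fun pi => (b : ℂ) * ((if pi.1 = 0 then (starRingEnd ℂ) ρvv else (starRingEnd ℂ) ρvh) * w pi.2))]
        have hD : (D1ᴴ *ᵥ w) l = ∑ i, (starRingEnd ℂ) (D1 i l) * w i := by
          simp [mulVec, dotProduct, conjTranspose_apply]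
        rw [hD, Finset.mul_sum]
        refine Finset.sum_congr rfl fun i _ => ?_
        simp only []
        have h1 : ρvv * (starRingEnd ℂ) ρvv = ((‖ρvv‖ : ℝ) : ℂ) ^ 2 := by
          rw [mul_comm, conj_mul_self_eq]
          push_cast
          ring
        have h2 : ρvh * (starRingEnd ℂ) ρvh = ((‖ρvh‖ : ℝ) : ℂ) ^ 2 := by
          rw [mul_comm, conj_mul_self_eq]
          push_cast
          ring
        rw [hSdef]
        push_cast
        linear_combination ((starRingEnd ℂ) (D1 i l) * w i * (b : ℂ)) * h1 +
          ((starRingEnd ℂ) (D1 i l) * w i * (b : ℂ)) * h2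
      calc (∑ l : Fin L, ‖(∑ pi : Fin 2 × Fin m,
              (if pi.1 = 0 then ρvv else ρvh) * (starRingEnd ℂ) (D1 pi.2 l) *
              ((b : ℂ) * ((if pi.1 = 0 then (starRingEnd ℂ) ρvv else (starRingEnd ℂ) ρvh) * w pi.2)))‖ ^ 2)
          = ∑ l, (b * S) ^ 2 * ‖((D1ᴴ *ᵥ w) l)‖ ^ 2 := by
            refine Finset.sum_congr rfl fun l _ => ?_
            rw [hinner l]
            rw [norm_mul, Complex.norm_real, Real.norm_eq_abs, mul_pow,
              _root_.abs_of_nonneg (by positivity : (0:ℝ) ≤ b * S)]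
        _ = (b * S) ^ 2 * lam := by rw [← Finset.mul_sum, hQ]
        _ = S * lam := by linear_combination S * lam * hb2
end

section
/- Let M_h, M_v ≥ 1, M = 2 M_h M_v, ρ_vv, ρ_vh ∈ ℂ with (ρ_vv, ρ_vh) ≠ (0,0), b = (|ρ_vv|² + |ρ_vh|²)^{−1/2}, and let R ∈ ℂ^{M×M} be unitary. Define the dualization map V_dual : ℂ^{M/2} → ℂ^M by V_dual(c) = b R^H ([ρ_vv*, ρ_vh*]ᵀ ⊗ c). Then for every c ∈ ℂ^{M/2} and all ψ_az, ψ_el ∈ ℝ, the dual-polarization reference gain equals the single-polarization beam pattern: | b ([ρ_vv, ρ_vh] ⊗ (d_{M_h}(ψ_az) ⊗ d_{M_v}(ψ_el))^H) R · V_dual(c) |² = | (d_{M_h}(ψ_az) ⊗ d_{M_v}(ψ_el))^H c |². Moreover ‖V_dual(c)‖₂ = ‖c‖₂. -/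
open Complex Matrix

/- STATEMENT 12: the dualization map `V_dual(c) = b R^H ([ρ_vv*, ρ_vh*]ᵀ ⊗ c)` preserves
the beam pattern: for every `c ∈ ℂ^{M/2}` and all `ψ_az, ψ_el`,
`|b ([ρ_vv, ρ_vh] ⊗ (d_{M_h}(ψ_az) ⊗ d_{M_v}(ψ_el))^H) R V_dual(c)|²
  = |(d_{M_h}(ψ_az) ⊗ d_{M_v}(ψ_el))^H c|²`, and `‖V_dual(c)‖₂ = ‖c‖₂`. -/
theorem stmt_12 (Mh Mv : ℕ) (hMh : 1 ≤ Mh) (hMv : 1 ≤ Mv)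
    (ρvv ρvh : ℂ) (hρ : (ρvv, ρvh) ≠ (0, 0))
    (R : Matrix (Fin 2 × (Fin Mh × Fin Mv)) (Fin 2 × (Fin Mh × Fin Mv)) ℂ)
    (hR : R ∈ Matrix.unitaryGroup (Fin 2 × (Fin Mh × Fin Mv)) ℂ)
    (c : Fin Mh × Fin Mv → ℂ) :
    let b : ℝ := (Real.sqrt (‖ρvv‖ ^ 2 + ‖ρvh‖ ^ 2))⁻¹
    let Vdual : Fin 2 × (Fin Mh × Fin Mv) → ℂ :=
      Rᴴ.mulVec (fun pk : Fin 2 × (Fin Mh × Fin Mv) =>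
        (b : ℂ) * ((if pk.1 = 0 then (starRingEnd ℂ) ρvv else (starRingEnd ℂ) ρvh) * c pk.2))
    (∀ ψaz ψel : ℝ,
      ‖((b : ℂ) * ∑ pk : Fin 2 × (Fin Mh × Fin Mv),
          (if pk.1 = 0 then ρvv else ρvh) *
            (starRingEnd ℂ) (arv Mh ψaz pk.2.1 * arv Mv ψel pk.2.2) * R.mulVec Vdual pk)‖ ^ 2
        = ‖(∑ k : Fin Mh × Fin Mv,
            (starRingEnd ℂ) (arv Mh ψaz k.1 * arv Mv ψel k.2) * c k)‖ ^ 2) ∧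
    Real.sqrt (∑ pk : Fin 2 × (Fin Mh × Fin Mv), ‖(Vdual pk)‖ ^ 2)
      = Real.sqrt (∑ k : Fin Mh × Fin Mv, ‖(c k)‖ ^ 2) := by
  intro b Vdual
  have hbnn : 0 ≤ b := by positivity
  have hne : ρvv ≠ 0 ∨ ρvh ≠ 0 := by
    by_contra h
    push_neg at h
    exact hρ (by simp [h.1, h.2])
  have hs : 0 < ‖ρvv‖ ^ 2 + ‖ρvh‖ ^ 2 := by
    rcases hne with h | h
    · nlinarith [norm_pos_iff.mpr h, norm_nonneg ρvh]
    · nlinarith [norm_pos_iff.mpr h, norm_nonneg ρvv]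
  have hb2 : b ^ 2 * (‖ρvv‖ ^ 2 + ‖ρvh‖ ^ 2) = 1 := by
    have h1 : Real.sqrt (‖ρvv‖ ^ 2 + ‖ρvh‖ ^ 2) ^ 2
        = ‖ρvv‖ ^ 2 + ‖ρvh‖ ^ 2 := Real.sq_sqrt hs.le
    rw [show b = (Real.sqrt (‖ρvv‖ ^ 2 + ‖ρvh‖ ^ 2))⁻¹ from rfl,
      inv_pow, h1, inv_mul_cancel₀ hs.ne']
  have hkey : (b : ℂ) * (b : ℂ) * (ρvv * (starRingEnd ℂ) ρvv + ρvh * (starRingEnd ℂ) ρvh) = 1 := by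
    rw [Complex.mul_conj, Complex.mul_conj, Complex.normSq_eq_norm_sq, Complex.normSq_eq_norm_sq]
    norm_cast
    linear_combination hb2
  set xfun : Fin 2 × (Fin Mh × Fin Mv) → ℂ :=
    fun pk : Fin 2 × (Fin Mh × Fin Mv) =>
      (b : ℂ) * ((if pk.1 = 0 then (starRingEnd ℂ) ρvv else (starRingEnd ℂ) ρvh) * c pk.2)
    with hxfun
  have hRR : R * Rᴴ = 1 := by
    have := hR.2
    rwa [Matrix.star_eq_conjTranspose] at this
  have hx : R.mulVec Vdual = xfun := by
    show R.mulVec (Rᴴ.mulVec xfun) = xfun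
    rw [Matrix.mulVec_mulVec, hRR, Matrix.one_mulVec]
  constructor
  · intro ψaz ψel
    have heq : (b : ℂ) * ∑ pk : Fin 2 × (Fin Mh × Fin Mv),
        (if pk.1 = 0 then ρvv else ρvh) *
          (starRingEnd ℂ) (arv Mh ψaz pk.2.1 * arv Mv ψel pk.2.2) * R.mulVec Vdual pk
        = ∑ k : Fin Mh × Fin Mv,
            (starRingEnd ℂ) (arv Mh ψaz k.1 * arv Mv ψel k.2) * c k := by
      rw [hx, hxfun, Fintype.sum_prod_type, Fin.sum_univ_two]
      simp only [Fin.isValue, if_true, one_ne_zero, if_false, Fin.one_eq_zero_iff,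
        Nat.succ_ne_self, ite_true, ite_false, reduceIte]
      rw [← Finset.sum_add_distrib, Finset.mul_sum]
      refine Finset.sum_congr rfl fun k _ => ?_
      linear_combination ((starRingEnd ℂ) (arv Mh ψaz k.1 * arv Mv ψel k.2) * c k) * hkey
    rw [heq]
  · congr 1
    have cast : ∀ v : Fin 2 × (Fin Mh × Fin Mv) → ℂ,
        ((∑ p, ‖v p‖ ^ 2 : ℝ) : ℂ) = star v ⬝ᵥ v := by
      intro v
      push_cast
      simp only [dotProduct, Pi.star_apply, Complex.star_def]
      refine Finset.sum_congr rfl fun p _ => ?_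
      rw [← Complex.ofReal_pow, Complex.sq_norm, ← Complex.normSq_eq_conj_mul_self]
    have hd : star Vdual ⬝ᵥ Vdual = star xfun ⬝ᵥ xfun := by
      show star (Rᴴ.mulVec xfun) ⬝ᵥ (Rᴴ.mulVec xfun) = _
      rw [Matrix.star_mulVec, Matrix.conjTranspose_conjTranspose, Matrix.dotProduct_mulVec,
        Matrix.vecMul_vecMul, hRR, Matrix.vecMul_one]
    have hreal : ∑ pk : Fin 2 × (Fin Mh × Fin Mv), ‖Vdual pk‖ ^ 2
        = ∑ pk : Fin 2 × (Fin Mh × Fin Mv), ‖xfun pk‖ ^ 2 := by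
      have := (cast Vdual).trans (hd.trans (cast xfun).symm)
      exact_mod_cast this
    rw [hreal, hxfun, Fintype.sum_prod_type, Fin.sum_univ_two]
    simp only [Fin.isValue, one_ne_zero, Fin.one_eq_zero_iff, Nat.succ_ne_self, ite_true,
      ite_false, reduceIte, norm_mul, Complex.norm_real, Real.norm_eq_abs, Complex.norm_conj,
      _root_.abs_of_nonneg hbnn]
    rw [← Finset.sum_add_distrib]
    refine Finset.sum_congr rfl fun k _ => ?_
    linear_combination ‖c k‖ ^ 2 * hb2
end

section
/- Let m_tx, m_rx ∈ ℕ, let P = [[ρ_vv, ρ_vh], [ρ_hv, ρ_hh]] ∈ ℂ^{2×2}, let u_rx ∈ ℂ^{m_rx}, u_tx ∈ ℂ^{m_tx}, let R ∈ ℂ^{2m_tx × 2m_tx} be unitary, let (ρ_vv, ρ_vh) ≠ (0,0), b = (|ρ_vv|² + |ρ_vh|²)^{−1/2}, and let c_s ∈ ℂ^{m_tx}. Set c_tx = b R^H ([ρ_vv*, ρ_vh*]ᵀ ⊗ c_s), ξ_v = |ρ_vv|² + |ρ_vh|², and ξ_h = ρ_vv ρ_hv* + ρ_vh ρ_hh*.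 Then for every c_rx ∈ ℂ^{2m_rx}: | c_rx^H ( P ⊗ (u_rx u_tx^H) ) R c_tx |² = b² · |u_tx^H c_s|² · | ([ξ_v, ξ_h] ⊗ u_rx^H) c_rx |². -/
open Complex Matrix

/- STATEMENT 13: receive-side gain decomposition (equation (63)).  With
`P = [[ρ_vv, ρ_vh], [ρ_hv, ρ_hh]]`, `R` unitary, `c_tx = b R^H ([ρ_vv*, ρ_vh*]ᵀ ⊗ c_s)`,
`ξ_v = |ρ_vv|²+|ρ_vh|²` and `ξ_h = ρ_vv ρ_hv* + ρ_vh ρ_hh*`, for every `c_rx ∈ ℂ^{2m_rx}`: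
`|c_rx^H (P ⊗ (u_rx u_tx^H)) R c_tx|² = b² |u_tx^H c_s|² |([ξ_v, ξ_h] ⊗ u_rx^H) c_rx|²`. -/
theorem stmt_13 (mtx mrx : ℕ) (ρvv ρvh ρhv ρhh : ℂ) (hρ : (ρvv, ρvh) ≠ (0, 0))
    (urx : Fin mrx → ℂ) (utx : Fin mtx → ℂ)
    (R : Matrix (Fin 2 × Fin mtx) (Fin 2 × Fin mtx) ℂ)
    (hR : R ∈ Matrix.unitaryGroup (Fin 2 × Fin mtx) ℂ)
    (cs : Fin mtx → ℂ) :
    let b : ℝ := (Real.sqrt (‖ρvv‖ ^ 2 + ‖ρvh‖ ^ 2))⁻¹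
    let P : Fin 2 → Fin 2 → ℂ := fun p q =>
      if p = 0 then (if q = 0 then ρvv else ρvh) else (if q = 0 then ρhv else ρhh)
    let ctx : Fin 2 × Fin mtx → ℂ :=
      Rᴴ.mulVec (fun qj : Fin 2 × Fin mtx =>
        (b : ℂ) * ((if qj.1 = 0 then (starRingEnd ℂ) ρvv else (starRingEnd ℂ) ρvh) * cs qj.2))
    let ξv : ℂ := ((‖ρvv‖ ^ 2 + ‖ρvh‖ ^ 2 : ℝ) : ℂ)
    let ξh : ℂ := ρvv * (starRingEnd ℂ) ρhv + ρvh * (starRingEnd ℂ) ρhh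
    let Hfull : Matrix (Fin 2 × Fin mrx) (Fin 2 × Fin mtx) ℂ :=
      Matrix.of (fun (pi : Fin 2 × Fin mrx) (qj : Fin 2 × Fin mtx) =>
        P pi.1 qj.1 * (urx pi.2 * (starRingEnd ℂ) (utx qj.2))) * R
    ∀ crx : Fin 2 × Fin mrx → ℂ,
      ‖(∑ pi : Fin 2 × Fin mrx, (starRingEnd ℂ) (crx pi) * Hfull.mulVec ctx pi)‖ ^ 2
        = b ^ 2 * ‖(∑ j : Fin mtx, (starRingEnd ℂ) (utx j) * cs j)‖ ^ 2 *
            ‖(∑ pi : Fin 2 × Fin mrx,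
              (if pi.1 = 0 then ξv else ξh) * (starRingEnd ℂ) (urx pi.2) * crx pi)‖ ^ 2 := by
  intro b P ctx ξv ξh Hfull crx
  have hb : (0:ℝ) ≤ b := inv_nonneg.mpr (Real.sqrt_nonneg _)
  have hRR : R * Rᴴ = 1 := by
    have := (Matrix.mem_unitaryGroup_iff).mp hR
    exact this
  set w : Fin 2 × Fin mtx → ℂ := fun qj =>
    (b : ℂ) * ((if qj.1 = 0 then (starRingEnd ℂ) ρvv else (starRingEnd ℂ) ρvh) * cs qj.2) with hw
  set M : Matrix (Fin 2 × Fin mrx) (Fin 2 × Fin mtx) ℂ :=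
    Matrix.of (fun (pi : Fin 2 × Fin mrx) (qj : Fin 2 × Fin mtx) =>
      P pi.1 qj.1 * (urx pi.2 * (starRingEnd ℂ) (utx qj.2))) with hM
  set S : ℂ := ∑ j, (starRingEnd ℂ) (utx j) * cs j with hS
  have hmv : Hfull.mulVec ctx = M.mulVec w := by
    show (M * R).mulVec (Rᴴ.mulVec w) = M.mulVec w
    rw [Matrix.mulVec_mulVec, Matrix.mul_assoc, hRR, Matrix.mul_one]
  have hξv : ξv = ρvv * (starRingEnd ℂ) ρvv + ρvh * (starRingEnd ℂ) ρvh := by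
    show (((‖ρvv‖ ^ 2 + ‖ρvh‖ ^ 2 : ℝ)) : ℂ) = _
    rw [Complex.mul_conj, Complex.mul_conj]
    push_cast [← Complex.sq_norm]
    ring
  have key : ∀ pi : Fin 2 × Fin mrx, M.mulVec w pi
      = (b:ℂ) * urx pi.2 * (if pi.1 = 0 then ξv else (starRingEnd ℂ) ξh) * S := by
    intro pi
    simp only [Matrix.mulVec, dotProduct, hM, Matrix.of_apply, hw]
    rw [Fintype.sum_prod_type, Fin.sum_univ_two]
    rw [hS, Finset.mul_sum, ← Finset.sum_add_distrib]
    refine Finset.sum_congr rfl fun j _ => ?_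
    have hP00 : P 0 0 = ρvv := rfl
    have hP01 : P 0 1 = ρvh := rfl
    have hP10 : P 1 0 = ρhv := rfl
    have hP11 : P 1 1 = ρhh := rfl
    have hξh : (starRingEnd ℂ) ξh
        = (starRingEnd ℂ) ρvv * ρhv + (starRingEnd ℂ) ρvh * ρhh := by
      show (starRingEnd ℂ) (ρvv * (starRingEnd ℂ) ρhv + ρvh * (starRingEnd ℂ) ρhh) = _
      simp [mul_comm]
    by_cases h : pi.1 = 0
    · simp only [h, hP00, hP01, reduceIte]
      rw [hξv]
      simp only [if_neg (by decide : ¬ ((1:Fin 2) = 0))]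
      ring
    · have h1 : pi.1 = 1 := by omega
      simp only [h1, hP10, hP11, reduceIte]
      rw [hξh]
      simp only [if_neg (by decide : ¬ ((1:Fin 2) = 0))]
      ring
  set z : ℂ := ∑ pi : Fin 2 × Fin mrx,
      (if pi.1 = 0 then ξv else ξh) * (starRingEnd ℂ) (urx pi.2) * crx pi with hz
  have hξvc : (starRingEnd ℂ) ξv = ξv := by
    show (starRingEnd ℂ) (((‖ρvv‖ ^ 2 + ‖ρvh‖ ^ 2 : ℝ)) : ℂ) = _
    exact Complex.conj_ofReal _
  have hsum : (∑ pi : Fin 2 × Fin mrx, (starRingEnd ℂ) (crx pi) * Hfull.mulVec ctx pi)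
      = (b:ℂ) * S * (starRingEnd ℂ) z := by
    rw [hmv]
    simp only [key, hz, map_sum, Finset.mul_sum]
    refine Finset.sum_congr rfl fun pi _ => ?_
    by_cases h : pi.1 = 0 <;>
      simp only [h, if_true, if_false, map_add, _root_.map_mul, hξvc, Complex.conj_conj] <;>
      ring
  rw [hsum]
  rw [norm_mul, norm_mul, Complex.norm_real, Complex.norm_conj,
    Real.norm_of_nonneg hb]
  ring
end
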